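/- Let S_n = Σ_{i=1}^{n/2} X_i + Σ_{i=n/2+1}^n Y_i with X_i i.i.d. N(0,σ₁²) and Y_i i.i.d. N(0,σ₂²) independent, 0 < σ₁ < σ₂, n even. Set a_n = √((σ₁²+σ₂²) log 2)·n − (√(σ₁²+σ₂²)/(4√(log 2)))·log n. Then there exist constants c₂, c₃ > 0 independent of n such that for all y ≥ 0, 2^n · P(S_n ≥ a_n + y) ≤ c₂ e^{−c₃ y}. -/

import Mathlib

set_option maxHeartbeats 1000000

open MeasureTheory ProbabilityTheory Filter

lemma integral_x_exp_Ioi {b : ℝ} (hb : 0 < b) (t : ℝ) :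
    ∫ x in Set.Ioi t, x * Real.exp (-b*x^2) = Real.exp (-b*t^2) / (2*b) := by
  have hderiv : ∀ x ∈ Set.Ici t,
      HasDerivAt (fun x => -Real.exp (-b*x^2)/(2*b)) (x * Real.exp (-b*x^2)) x := by
    intro x _
    have h1 : HasDerivAt (fun x : ℝ => -b*x^2) (-b*(2*x)) x := by
      simpa using (hasDerivAt_pow 2 x).const_mul (-b)
    have h2 := (h1.exp.neg).div_const (2*b)
    refine h2.congr_deriv ?_
    rw [div_eq_iff (by positivity)]
    ring
  have htend : Tendsto (fun x => -Real.exp (-b*x^2)/(2*b)) atTop (nhds 0) := by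
    have h0 : Tendsto (fun x : ℝ => Real.exp (-b*x^2)) atTop (nhds 0) :=
      (exp_neg_mul_sq_isLittleO_exp_neg hb).isBigO.trans_tendsto
        (Real.tendsto_exp_neg_atTop_nhds_zero)
    simpa using (h0.neg).div_const (2*b)
  have hint : MeasureTheory.IntegrableOn (fun x => x * Real.exp (-b*x^2)) (Set.Ioi t) :=
    (integrable_mul_exp_neg_mul_sq hb).integrableOn
  have := MeasureTheory.integral_Ioi_of_hasDerivAt_of_tendsto' hderiv hint htend
  rw [this]
  field_simp
  ring

lemma gauss_tail {v t : ℝ} (hv : 0 < v) (ht : 0 < t) :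
    ((gaussianReal 0 v.toNNReal) {x : ℝ | t ≤ x}).toReal
      ≤ Real.sqrt (v / (2*Real.pi)) / t * Real.exp (-t^2/(2*v)) := by
  have hπ := Real.pi_pos
  have hv' : v.toNNReal ≠ 0 := by
    simp [Real.toNNReal_eq_zero, not_le, hv]
  have hco : ((v.toNNReal : ℝ)) = v := Real.coe_toNNReal _ hv.le
  have hset : {x : ℝ | t ≤ x} = Set.Ici t := rfl
  rw [hset, gaussianReal_apply_eq_integral 0 hv' _,
    ENNReal.toReal_ofReal (integral_nonneg fun x => gaussianPDFReal_nonneg _ _ _)]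
  have hb : (0:ℝ) < (2*v)⁻¹ := by positivity
  have hpdf : ∀ x : ℝ, gaussianPDFReal 0 v.toNNReal x
      = (Real.sqrt (2*Real.pi*v))⁻¹ * Real.exp (-(2*v)⁻¹ * x^2) := by
    intro x
    rw [gaussianPDFReal, hco]
    ring_nf
  have hint2 : MeasureTheory.Integrable
      (fun x : ℝ => (Real.sqrt (2*Real.pi*v))⁻¹/t * (x * Real.exp (-(2*v)⁻¹ * x^2))) :=
    (integrable_mul_exp_neg_mul_sq hb).const_mul _
  have hmono : ∫ x in Set.Ici t, gaussianPDFReal 0 v.toNNReal x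
      ≤ ∫ x in Set.Ici t, (Real.sqrt (2*Real.pi*v))⁻¹/t * (x * Real.exp (-(2*v)⁻¹ * x^2)) := by
    refine setIntegral_mono_on ((integrable_gaussianPDFReal _ _).integrableOn)
      (hint2.integrableOn) measurableSet_Ici ?_
    intro x hx
    rw [hpdf x]
    have hx' : t ≤ x := hx
    have h1 : (1:ℝ) ≤ x / t := (one_le_div ht).mpr hx'
    have hE : (0:ℝ) < Real.exp (-(2*v)⁻¹ * x^2) := Real.exp_pos _
    have hS : (0:ℝ) < (Real.sqrt (2*Real.pi*v))⁻¹ := by positivity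
    calc (Real.sqrt (2*Real.pi*v))⁻¹ * Real.exp (-(2*v)⁻¹ * x^2)
        ≤ (x/t) * ((Real.sqrt (2*Real.pi*v))⁻¹ * Real.exp (-(2*v)⁻¹ * x^2)) := by
          nlinarith [mul_pos hS hE]
      _ = (Real.sqrt (2*Real.pi*v))⁻¹/t * (x * Real.exp (-(2*v)⁻¹ * x^2)) := by ring
  refine hmono.trans ?_
  rw [MeasureTheory.integral_Ici_eq_integral_Ioi, integral_const_mul, integral_x_exp_Ioi hb t]
  have he : Real.exp (-(2*v)⁻¹*t^2) = Real.exp (-t^2/(2*v)) := by ring_nf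
  rw [he]
  have hkey : (Real.sqrt (2*Real.pi*v))⁻¹/t * (Real.exp (-t^2/(2*v)) / (2*(2*v)⁻¹))
      = (v / Real.sqrt (2*Real.pi*v)) / t * Real.exp (-t^2/(2*v)) := by
    field_simp
  rw [hkey]
  have hvs : v / Real.sqrt (2*Real.pi*v) = Real.sqrt (v/(2*Real.pi)) := by
    rw [show v/(2*Real.pi) = v^2 / (2*Real.pi*v) by field_simp,
      Real.sqrt_div (sq_nonneg v), Real.sqrt_sq hv.le]
  rw [hvs]

/-- first moment upper bound in the increasing variances case.
S_n ~ N(0, (σ₁²+σ₂²)n/2). -/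
theorem stmt9 (σ1 σ2 : ℝ) (h1 : 0 < σ1) (h12 : σ1 < σ2) :
    ∃ c2 c3 : ℝ, 0 < c2 ∧ 0 < c3 ∧ ∀ n : ℕ, 1 ≤ n → ∀ y : ℝ, 0 ≤ y →
      (2:ℝ)^n *
        ((gaussianReal 0 (Real.toNNReal ((σ1^2 + σ2^2)*n/2)))
          {x : ℝ | Real.sqrt ((σ1^2 + σ2^2) * Real.log 2) * n
            - (Real.sqrt (σ1^2 + σ2^2)/(4*Real.sqrt (Real.log 2))) * Real.log n
            + y ≤ x}).toReal
      ≤ c2 * Real.exp (-c3 * y) := by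
  have hπ := Real.pi_pos
  set s := σ1^2 + σ2^2 with hs_def
  have hs : 0 < s := by positivity
  have hLgt : (1:ℝ)/4 < Real.log 2 := by
    have := Real.log_two_gt_d9; linarith
  set L := Real.log 2 with hL_def
  have hL0 : (0:ℝ) < L := by linarith
  set α := Real.sqrt (s*L) with hα_def
  set β := Real.sqrt s / (4*Real.sqrt L) with hβ_def
  have hss : Real.sqrt s * Real.sqrt s = s := Real.mul_self_sqrt hs.le
  have hLL : Real.sqrt L * Real.sqrt L = L := Real.mul_self_sqrt hL0.le
  have hsL : Real.sqrt L ≠ 0 := by positivity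
  have hβ0 : 0 ≤ β := by rw [hβ_def]; positivity
  have hβ2 : β = Real.sqrt (s/(16*L)) := by
    rw [hβ_def, Real.sqrt_div hs.le, Real.sqrt_mul (by norm_num : (0:ℝ) ≤ 16),
      show Real.sqrt 16 = 4 by
        rw [show (16:ℝ) = 4^2 by norm_num, Real.sqrt_sq (by norm_num)]]
  have hβα : β < α := by
    rw [hβ2, hα_def]
    apply Real.sqrt_lt_sqrt (by positivity)
    rw [div_lt_iff₀ (by positivity)]
    have h16 : (1:ℝ) < 16*L^2 := by nlinarith
    nlinarith [mul_lt_mul_of_pos_left h16 hs]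
  set γ := α - β with hγ_def
  have hγ0 : 0 < γ := by rw [hγ_def]; linarith
  have hα2 : α^2 = s*L := Real.sq_sqrt (by positivity)
  have hαβ : α*β = s/4 := by
    rw [hα_def, hβ_def, Real.sqrt_mul hs.le]
    field_simp
    linear_combination hss
  clear_value γ β α L s
  refine ⟨Real.sqrt (s/(4*Real.pi))/γ, 2*γ/s, by positivity, by positivity, ?_⟩
  intro n hn y hy
  set N := (n:ℝ) with hN_def
  have hN : (1:ℝ) ≤ N := by rw [hN_def]; exact_mod_cast hn
  have hN0 : (0:ℝ) < N := by linarith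
  have hlog0 : 0 ≤ Real.log N := Real.log_nonneg hN
  have hlog : Real.log N ≤ N := (Real.log_le_sub_one_of_pos hN0).trans (by linarith)
  set v := s*N/2 with hv_def
  have hv : 0 < v := by rw [hv_def]; positivity
  set t := α*N - β*Real.log N + y with ht_def
  have hu : γ*N ≤ α*N - β*Real.log N := by
    rw [hγ_def]; nlinarith
  have hγN : γ*N ≤ t := by rw [ht_def]; linarith
  have ht0 : 0 < t := lt_of_lt_of_le (by positivity) hγN
  clear_value t v N
  refine le_trans (mul_le_mul_of_nonneg_left (gauss_tail hv ht0) (by positivity)) ?_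
  -- bound the prefactor
  have hpre : Real.sqrt (v/(2*Real.pi))/t
      ≤ Real.sqrt (s/(4*Real.pi)) * Real.sqrt N/(γ*N) := by
    have h1 : Real.sqrt (v/(2*Real.pi)) = Real.sqrt (s/(4*Real.pi)) * Real.sqrt N := by
      rw [← Real.sqrt_mul (by positivity)]
      congr 1
      rw [hv_def]; field_simp; ring
    rw [h1]
    exact div_le_div_of_nonneg_left (by positivity) (by positivity) hγN
  -- bound the exponential
  have hexp_arg : N*L - Real.log N/2 + (2*γ/s)*y ≤ t^2/(2*v) := by
    rw [le_div_iff₀ (by positivity)]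
    have hu2 : s*L*N^2 - (s/2)*N*Real.log N + 2*γ*N*y ≤ t^2 := by
      have hmul : γ*N*y ≤ (α*N - β*Real.log N)*y := mul_le_mul_of_nonneg_right hu hy
      have expand : t^2 = (α*N - β*Real.log N)^2 + 2*((α*N - β*Real.log N)*y) + y^2 := by
        rw [ht_def]; ring
      have hsq : (α*N - β*Real.log N)^2
          = s*L*N^2 - (s/2)*N*Real.log N + (β*Real.log N)^2 := by
        have h' : (α*N - β*Real.log N)^2
            = α^2*N^2 - 2*(α*β)*(N*Real.log N) + (β*Real.log N)^2 := by ring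
        rw [h', hα2, hαβ]; ring
      rw [expand, hsq]
      linarith [sq_nonneg (β*Real.log N), sq_nonneg y, hmul]
    calc (N*L - Real.log N/2 + (2*γ/s)*y) * (2*v)
        = s*L*N^2 - (s/2)*N*Real.log N + 2*γ*N*y := by
          rw [hv_def]; field_simp
      _ ≤ t^2 := hu2
  have hsqrtN : Real.sqrt N = Real.exp (Real.log N / 2) := by
    rw [← Real.exp_log (Real.sqrt_pos.mpr hN0), Real.log_sqrt hN0.le]
  have hexp : Real.exp (-t^2/(2*v))
      ≤ Real.exp (-(N*L)) * Real.sqrt N * Real.exp (-(2*γ/s)*y) := by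
    rw [hsqrtN, ← Real.exp_add, ← Real.exp_add, Real.exp_le_exp]
    have h := hexp_arg
    rw [neg_div]
    linarith
  have h2n : (2:ℝ)^n * Real.exp (-(N*L)) = 1 := by
    rw [Real.exp_neg, hL_def, hN_def, Real.exp_nat_mul, Real.exp_log (by norm_num : (0:ℝ) < 2)]
    exact mul_inv_cancel₀ (pow_ne_zero _ (by norm_num))
  have hNN : Real.sqrt N * Real.sqrt N = N := Real.mul_self_sqrt hN0.le
  have hstep : Real.sqrt (v/(2*Real.pi))/t * Real.exp (-t^2/(2*v))
      ≤ (Real.sqrt (s/(4*Real.pi)) * Real.sqrt N/(γ*N))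
        * (Real.exp (-(N*L)) * Real.sqrt N * Real.exp (-(2*γ/s)*y)) := by
    apply mul_le_mul hpre hexp (Real.exp_pos _).le (by positivity)
  refine le_trans (mul_le_mul_of_nonneg_left hstep (by positivity)) ?_
  have heq : (2:ℝ)^n * ((Real.sqrt (s/(4*Real.pi)) * Real.sqrt N/(γ*N))
        * (Real.exp (-(N*L)) * Real.sqrt N * Real.exp (-(2*γ/s)*y)))
      = ((2:ℝ)^n * Real.exp (-(N*L))) * (Real.sqrt (s/(4*Real.pi))/γ)
        * ((Real.sqrt N * Real.sqrt N)/N) * Real.exp (-(2*γ/s)*y) := by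
    ring
  rw [heq, h2n, hNN, div_self (ne_of_gt hN0), one_mul, mul_one]
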